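/- If U is a vertex cover of the fixed graph G of size exactly 4(k−1) + 4·log k, then there exist indices i, j ∈ {0,…,k−1} such that none of the four nodes a₁^i, a₂^j, b₁^i, b₂^j belongs to U. -/

import Mathlib

namespace VCLowerBound

/-- The vertices of the fixed lower-bound graph for minimum vertex cover:
four cliques `A₁, A₂, B₁, B₂` of size `k` and, for each of them,
bit-gadget nodes `f_S^h` and `t_S^h` for `0 ≤ h ≤ log k − 1`. -/
inductive V (k : ℕ) : Type
  | a1 : Fin k → V k
  | a2 : Fin k → V k
  | b1 : Fin k → V k
  | b2 : Fin k → V k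
  | fA1 : Fin (Nat.log 2 k) → V k
  | tA1 : Fin (Nat.log 2 k) → V k
  | fA2 : Fin (Nat.log 2 k) → V k
  | tA2 : Fin (Nat.log 2 k) → V k
  | fB1 : Fin (Nat.log 2 k) → V k
  | tB1 : Fin (Nat.log 2 k) → V k
  | fB2 : Fin (Nat.log 2 k) → V k
  | tB2 : Fin (Nat.log 2 k) → V k

open V

/-- The fixed graph `G`: each of `A₁, A₂, B₁, B₂` is a clique; for each `h` and each
side `ℓ ∈ {1,2}` the bit-nodes `(f^h_{A_ℓ}, t^h_{A_ℓ}, f^h_{B_ℓ}, t^h_{B_ℓ})`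
form a 4-cycle; and each node `s^i` is connected to its `bin`-nodes:
`f_S^h` when bit `h` of `i` is `0`, and `t_S^h` when bit `h` of `i` is `1`. -/
def G (k : ℕ) : SimpleGraph (V k) :=
  SimpleGraph.fromEdgeSet
    ({e | ∃ i j : Fin k,
        e = s(a1 i, a1 j) ∨ e = s(a2 i, a2 j) ∨ e = s(b1 i, b1 j) ∨ e = s(b2 i, b2 j)} ∪
     {e | ∃ h : Fin (Nat.log 2 k),
        e = s(fA1 h, tA1 h) ∨ e = s(tA1 h, fB1 h) ∨ e = s(fB1 h, tB1 h) ∨ e = s(tB1 h, fA1 h) ∨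
        e = s(fA2 h, tA2 h) ∨ e = s(tA2 h, fB2 h) ∨ e = s(fB2 h, tB2 h) ∨ e = s(tB2 h, fA2 h)} ∪
     {e | ∃ (i : Fin k) (h : Fin (Nat.log 2 k)),
        (i.val.testBit h.val = false ∧
          (e = s(a1 i, fA1 h) ∨ e = s(a2 i, fA2 h) ∨ e = s(b1 i, fB1 h) ∨ e = s(b2 i, fB2 h))) ∨
        (i.val.testBit h.val = true ∧
          (e = s(a1 i, tA1 h) ∨ e = s(a2 i, tA2 h) ∨ e = s(b1 i, tB1 h) ∨ e = s(b2 i, tB2 h)))})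

/-- A vertex cover: a set of vertices containing at least one endpoint of every edge. -/
def IsVertexCover {α : Type*} (G : SimpleGraph α) (U : Set α) : Prop :=
  ∀ ⦃u v : α⦄, G.Adj u v → u ∈ U ∨ v ∈ U


deriving instance DecidableEq for V

variable {k : ℕ}

abbrev Target (k : ℕ) :=
  (Fin k ⊕ Fin k ⊕ Fin k ⊕ Fin k ⊕ Fin (Nat.log 2 k) ⊕ Fin (Nat.log 2 k) ⊕ Fin (Nat.log 2 k) ⊕
    Fin (Nat.log 2 k) ⊕ Fin (Nat.log 2 k) ⊕ Fin (Nat.log 2 k) ⊕ Fin (Nat.log 2 k) ⊕ Fin (Nat.log 2 k))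

def equivSum (k : ℕ) : V k ≃ Target k where
  toFun v := match v with
    | a1 i => .inl i
    | a2 i => .inr (.inl i)
    | b1 i => .inr (.inr (.inl i))
    | b2 i => .inr (.inr (.inr (.inl i)))
    | fA1 h => .inr (.inr (.inr (.inr (.inl h))))
    | tA1 h => .inr (.inr (.inr (.inr (.inr (.inl h)))))
    | fA2 h => .inr (.inr (.inr (.inr (.inr (.inr (.inl h))))))
    | tA2 h => .inr (.inr (.inr (.inr (.inr (.inr (.inr (.inl h)))))))
    | fB1 h => .inr (.inr (.inr (.inr (.inr (.inr (.inr (.inr (.inl h))))))))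
    | tB1 h => .inr (.inr (.inr (.inr (.inr (.inr (.inr (.inr (.inr (.inl h)))))))))
    | fB2 h => .inr (.inr (.inr (.inr (.inr (.inr (.inr (.inr (.inr (.inr (.inl h))))))))))
    | tB2 h => .inr (.inr (.inr (.inr (.inr (.inr (.inr (.inr (.inr (.inr (.inr h))))))))))
  invFun x := match x with
    | .inl i => a1 i
    | .inr (.inl i) => a2 i
    | .inr (.inr (.inl i)) => b1 i
    | .inr (.inr (.inr (.inl i))) => b2 i
    | .inr (.inr (.inr (.inr (.inl h)))) => fA1 h
    | .inr (.inr (.inr (.inr (.inr (.inl h))))) => tA1 h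
    | .inr (.inr (.inr (.inr (.inr (.inr (.inl h)))))) => fA2 h
    | .inr (.inr (.inr (.inr (.inr (.inr (.inr (.inl h))))))) => tA2 h
    | .inr (.inr (.inr (.inr (.inr (.inr (.inr (.inr (.inl h)))))))) => fB1 h
    | .inr (.inr (.inr (.inr (.inr (.inr (.inr (.inr (.inr (.inl h))))))))) => tB1 h
    | .inr (.inr (.inr (.inr (.inr (.inr (.inr (.inr (.inr (.inr (.inl h)))))))))) => fB2 h
    | .inr (.inr (.inr (.inr (.inr (.inr (.inr (.inr (.inr (.inr (.inr h)))))))))) => tB2 h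
  left_inv v := by cases v <;> rfl
  right_inv x := by rcases x with i|i|i|i|h|h|h|h|h|h|h|h <;> rfl

instance : Fintype (V k) := Fintype.ofEquiv _ (equivSum k).symm

lemma card_V : Fintype.card (V k) = 4 * k + 8 * Nat.log 2 k := by
  rw [Fintype.card_congr (equivSum k)]
  simp [Target, Fintype.card_sum]; ring

lemma adj_clique (i j : Fin k) (hij : i ≠ j) :
      (G k).Adj (a1 i) (a1 j) ∧ (G k).Adj (a2 i) (a2 j) ∧ (G k).Adj (b1 i) (b1 j) ∧
      (G k).Adj (b2 i) (b2 j) := by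
  refine ⟨?_, ?_, ?_, ?_⟩ <;>
  · rw [G, SimpleGraph.fromEdgeSet_adj]
    exact ⟨Or.inl (Or.inl ⟨i, j, by tauto⟩), by simp [hij]⟩

lemma adj_cyc (h : Fin (Nat.log 2 k)) :
    (G k).Adj (fA1 h) (tA1 h) ∧ (G k).Adj (tA1 h) (fB1 h) ∧ (G k).Adj (fB1 h) (tB1 h) ∧
    (G k).Adj (tB1 h) (fA1 h) ∧
    (G k).Adj (fA2 h) (tA2 h) ∧ (G k).Adj (tA2 h) (fB2 h) ∧ (G k).Adj (fB2 h) (tB2 h) ∧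
    (G k).Adj (tB2 h) (fA2 h) := by
  refine ⟨?_, ?_, ?_, ?_, ?_, ?_, ?_, ?_⟩ <;>
  · rw [G, SimpleGraph.fromEdgeSet_adj]
    exact ⟨Or.inl (Or.inr ⟨h, by tauto⟩), by simp⟩

lemma adj_bit_false {i : Fin k} {h : Fin (Nat.log 2 k)} (hb : i.val.testBit h.val = false) :
    (G k).Adj (a1 i) (fA1 h) ∧ (G k).Adj (a2 i) (fA2 h) ∧ (G k).Adj (b1 i) (fB1 h) ∧
    (G k).Adj (b2 i) (fB2 h) := by
  refine ⟨?_, ?_, ?_, ?_⟩ <;>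
  · rw [G, SimpleGraph.fromEdgeSet_adj]
    exact ⟨Or.inr ⟨i, h, Or.inl ⟨hb, by tauto⟩⟩, by simp⟩

lemma adj_bit_true {i : Fin k} {h : Fin (Nat.log 2 k)} (hb : i.val.testBit h.val = true) :
    (G k).Adj (a1 i) (tA1 h) ∧ (G k).Adj (a2 i) (tA2 h) ∧ (G k).Adj (b1 i) (tB1 h) ∧
    (G k).Adj (b2 i) (tB2 h) := by
  refine ⟨?_, ?_, ?_, ?_⟩ <;>
  · rw [G, SimpleGraph.fromEdgeSet_adj]
    exact ⟨Or.inr ⟨i, h, Or.inr ⟨hb, by tauto⟩⟩, by simp⟩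

def idx : V k → Fin 4 ⊕ (Fin (Nat.log 2 k) × Fin 2)
  | a1 _ => .inl 0
  | a2 _ => .inl 1
  | b1 _ => .inl 2
  | b2 _ => .inl 3
  | fA1 h => .inr (h, 0)
  | tA1 h => .inr (h, 0)
  | fB1 h => .inr (h, 0)
  | tB1 h => .inr (h, 0)
  | fA2 h => .inr (h, 1)
  | tA2 h => .inr (h, 1)
  | fB2 h => .inr (h, 1)
  | tB2 h => .inr (h, 1)

/-- If `U` is a vertex cover of the fixed graph `G` of size exactly `4(k−1) + 4·log k`,
then there are indices `i, j` such that none of `a₁^i, a₂^j, b₁^i, b₂^j` belongs to `U`. -/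
theorem exists_uncovered_of_vertexCover_card_eq (k : ℕ) (hk : 2 ≤ k)
    (hpow : ∃ m : ℕ, k = 2 ^ m) (U : Set (V k)) (hU : IsVertexCover (G k) U)
    (hcard : U.ncard = 4 * (k - 1) + 4 * Nat.log 2 k) :
    ∃ i j : Fin k, a1 i ∉ U ∧ a2 j ∉ U ∧ b1 i ∉ U ∧ b2 j ∉ U := by
  classical
  obtain ⟨m, hm⟩ := hpow
  set L := Nat.log 2 k with hLdef
  have hLm : L = m := by rw [hLdef, hm, Nat.log_pow one_lt_two]
  set WF : Finset (V k) := U.toFinsetᶜ with hWFdef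
  have hmemW : ∀ v : V k, v ∈ WF ↔ v ∉ U := by
    intro v; simp [hWFdef]
  have hWcard : WF.card = 4 * L + 4 := by
    have h1 : U.ncard = U.toFinset.card := Set.ncard_eq_toFinset_card' U
    have h2 := Finset.card_compl (U.toFinset (α := V k))
    rw [card_V] at h2
    rw [hWFdef]
    omega
  set F : (Fin 4 ⊕ (Fin L × Fin 2)) → Finset (V k) :=
    fun t => WF.filter (fun v => idx v = t) with hFdef
  have hfiber : WF.card = ∑ t : Fin 4 ⊕ (Fin L × Fin 2), (F t).card :=
    Finset.card_eq_sum_card_fiberwise (fun x _ => Finset.mem_univ _)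
  have hmem0 : ∀ (h : Fin L) (v : V k), v ∈ F (.inr (h, 0)) →
      v = fA1 h ∨ v = tA1 h ∨ v = fB1 h ∨ v = tB1 h := by
    intro h v hv
    rw [hFdef, Finset.mem_filter] at hv
    obtain ⟨-, hv⟩ := hv
    cases v <;> simp [idx, Prod.ext_iff, Fin.ext_iff] at hv ⊢ <;> tauto
  have hmem1 : ∀ (h : Fin L) (v : V k), v ∈ F (.inr (h, 1)) →
      v = fA2 h ∨ v = tA2 h ∨ v = fB2 h ∨ v = tB2 h := by
    intro h v hv
    rw [hFdef, Finset.mem_filter] at hv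
    obtain ⟨-, hv⟩ := hv
    cases v <;> simp [idx, Prod.ext_iff, Fin.ext_iff] at hv ⊢ <;> tauto
  have hWFsub : ∀ t, F t ⊆ WF := by
    intro t; rw [hFdef]; exact Finset.filter_subset _ _
  have hd0 : ∀ h : Fin L, (fA1 h ∈ U ∧ fB1 h ∈ U) ∨ (tA1 h ∈ U ∧ tB1 h ∈ U) := by
    intro h
    by_cases h1 : tA1 h ∈ U
    · by_cases h2 : tB1 h ∈ U
      · exact Or.inr ⟨h1, h2⟩
      · exact Or.inl ⟨(hU (adj_cyc h).2.2.2.1).resolve_left h2,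
          (hU (adj_cyc h).2.2.1).resolve_right h2⟩
    · exact Or.inl ⟨(hU (adj_cyc h).1).resolve_right h1,
        (hU (adj_cyc h).2.1).resolve_left h1⟩
  have hd1 : ∀ h : Fin L, (fA2 h ∈ U ∧ fB2 h ∈ U) ∨ (tA2 h ∈ U ∧ tB2 h ∈ U) := by
    intro h
    by_cases h1 : tA2 h ∈ U
    · by_cases h2 : tB2 h ∈ U
      · exact Or.inr ⟨h1, h2⟩
      · exact Or.inl ⟨(hU (adj_cyc h).2.2.2.2.2.2.2).resolve_left h2,
          (hU (adj_cyc h).2.2.2.2.2.2.1).resolve_right h2⟩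
    · exact Or.inl ⟨(hU (adj_cyc h).2.2.2.2.1).resolve_right h1,
        (hU (adj_cyc h).2.2.2.2.2.1).resolve_left h1⟩
  have hsub0 : ∀ h : Fin L,
      F (.inr (h, 0)) ⊆ {tA1 h, tB1 h} ∨ F (.inr (h, 0)) ⊆ {fA1 h, fB1 h} := by
    intro h
    rcases hd0 h with ⟨hf1, hf2⟩ | ⟨ht1, ht2⟩
    · left; intro v hv
      have hnU : v ∉ U := (hmemW v).mp (hWFsub _ hv)
      rcases hmem0 h v hv with rfl | rfl | rfl | rfl
      · exact absurd hf1 hnU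
      · simp
      · exact absurd hf2 hnU
      · simp
    · right; intro v hv
      have hnU : v ∉ U := (hmemW v).mp (hWFsub _ hv)
      rcases hmem0 h v hv with rfl | rfl | rfl | rfl
      · simp
      · exact absurd ht1 hnU
      · simp
      · exact absurd ht2 hnU
  have hsub1 : ∀ h : Fin L,
      F (.inr (h, 1)) ⊆ {tA2 h, tB2 h} ∨ F (.inr (h, 1)) ⊆ {fA2 h, fB2 h} := by
    intro h
    rcases hd1 h with ⟨hf1, hf2⟩ | ⟨ht1, ht2⟩
    · left; intro v hv
      have hnU : v ∉ U := (hmemW v).mp (hWFsub _ hv)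
      rcases hmem1 h v hv with rfl | rfl | rfl | rfl
      · exact absurd hf1 hnU
      · simp
      · exact absurd hf2 hnU
      · simp
    · right; intro v hv
      have hnU : v ∉ U := (hmemW v).mp (hWFsub _ hv)
      rcases hmem1 h v hv with rfl | rfl | rfl | rfl
      · simp
      · exact absurd ht1 hnU
      · simp
      · exact absurd ht2 hnU
  set Bnd : (Fin 4 ⊕ (Fin L × Fin 2)) → ℕ := Sum.elim (fun _ => 1) (fun _ => 2) with hBdef
  have hle : ∀ t ∈ (Finset.univ : Finset (Fin 4 ⊕ (Fin L × Fin 2))), (F t).card ≤ Bnd t := by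
    rintro (i | ⟨h, l⟩) -
    · refine Finset.card_le_one.mpr ?_
      intro a ha b hb
      rw [hFdef, Finset.mem_filter] at ha hb
      have hna : a ∉ U := (hmemW a).mp ha.1
      have hnb : b ∉ U := (hmemW b).mp hb.1
      cases a <;> cases b <;>
        first
        | (have hh := ha.2; simp [idx] at hh; done)
        | (have hh := hb.2; simp [idx] at hh; done)
        | (rename_i i' j'
           by_contra hne
           have hne' : i' ≠ j' := fun hh => hne (congrArg _ hh)
           obtain ⟨e1, e2, e3, e4⟩ := adj_clique i' j' hne'
           first
           | exact (hU e1).elim hna hnb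
           | exact (hU e2).elim hna hnb
           | exact (hU e3).elim hna hnb
           | exact (hU e4).elim hna hnb)
        | (have hab := Sum.inl.inj (ha.2.trans hb.2.symm)
           exact absurd hab (by decide))
    · have hl2 : l = 0 ∨ l = 1 := Fin.cases (Or.inl rfl) (fun l' => Fin.cases (Or.inr rfl) (fun x => x.elim0) l') l
      rcases hl2 with rfl | rfl
      · rcases hsub0 h with hs | hs
        · exact (Finset.card_le_card hs).trans (le_of_eq (Finset.card_pair (by simp)))
        · exact (Finset.card_le_card hs).trans (le_of_eq (Finset.card_pair (by simp)))
      · rcases hsub1 h with hs | hs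
        · exact (Finset.card_le_card hs).trans (le_of_eq (Finset.card_pair (by simp)))
        · exact (Finset.card_le_card hs).trans (le_of_eq (Finset.card_pair (by simp)))
  have hsumB : ∑ t : Fin 4 ⊕ (Fin L × Fin 2), Bnd t = 4 + 4 * L := by
    rw [hBdef, Fintype.sum_sum_type]
    simp [Finset.card_univ]
    ring
  have heq : ∀ t ∈ (Finset.univ : Finset (Fin 4 ⊕ (Fin L × Fin 2))), (F t).card = Bnd t := by
    refine (Finset.sum_eq_sum_iff_of_le hle).mp ?_
    rw [← hfiber, hWcard, hsumB]
    omega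
  -- extract the uncovered clique vertices
  have hexA1 : ∃ i : Fin k, a1 i ∉ U := by
    have h1 : (F (.inl 0)).Nonempty := by
      rw [← Finset.card_pos, heq (.inl 0) (Finset.mem_univ _)]
      simp [hBdef]
    obtain ⟨v, hv⟩ := h1
    have hvW : v ∉ U := (hmemW v).mp (hWFsub _ hv)
    have hvidx : idx v = .inl 0 := by
      rw [hFdef, Finset.mem_filter] at hv; exact hv.2
    cases v <;>
      first
      | exact ⟨_, hvW⟩
      | (have hh := hvidx; simp [idx] at hh; done)
      | exact absurd (Sum.inl.inj hvidx) (by decide)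
  have hexA2 : ∃ j : Fin k, a2 j ∉ U := by
    have h1 : (F (.inl 1)).Nonempty := by
      rw [← Finset.card_pos, heq (.inl 1) (Finset.mem_univ _)]
      simp [hBdef]
    obtain ⟨v, hv⟩ := h1
    have hvW : v ∉ U := (hmemW v).mp (hWFsub _ hv)
    have hvidx : idx v = .inl 1 := by
      rw [hFdef, Finset.mem_filter] at hv; exact hv.2
    cases v <;>
      first
      | exact ⟨_, hvW⟩
      | (have hh := hvidx; simp [idx] at hh; done)
      | exact absurd (Sum.inl.inj hvidx) (by decide)
  have hexB1 : ∃ i : Fin k, b1 i ∉ U := by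
    have h1 : (F (.inl 2)).Nonempty := by
      rw [← Finset.card_pos, heq (.inl 2) (Finset.mem_univ _)]
      simp [hBdef]
    obtain ⟨v, hv⟩ := h1
    have hvW : v ∉ U := (hmemW v).mp (hWFsub _ hv)
    have hvidx : idx v = .inl 2 := by
      rw [hFdef, Finset.mem_filter] at hv; exact hv.2
    cases v <;>
      first
      | exact ⟨_, hvW⟩
      | (have hh := hvidx; simp [idx] at hh; done)
      | exact absurd (Sum.inl.inj hvidx) (by decide)
  have hexB2 : ∃ j : Fin k, b2 j ∉ U := by
    have h1 : (F (.inl 3)).Nonempty := by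
      rw [← Finset.card_pos, heq (.inl 3) (Finset.mem_univ _)]
      simp [hBdef]
    obtain ⟨v, hv⟩ := h1
    have hvW : v ∉ U := (hmemW v).mp (hWFsub _ hv)
    have hvidx : idx v = .inl 3 := by
      rw [hFdef, Finset.mem_filter] at hv; exact hv.2
    cases v <;>
      first
      | exact ⟨_, hvW⟩
      | (have hh := hvidx; simp [idx] at hh; done)
      | exact absurd (Sum.inl.inj hvidx) (by decide)
  obtain ⟨i1, hi1⟩ := hexA1
  obtain ⟨j2, hj2⟩ := hexA2
  obtain ⟨i3, hi3⟩ := hexB1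
  obtain ⟨j4, hj4⟩ := hexB2
  -- the exact cycle structure
  have key0 : ∀ h : Fin L, (tA1 h ∉ U ∧ tB1 h ∉ U) ∨ (fA1 h ∉ U ∧ fB1 h ∉ U) := by
    intro h
    have hc : (F (.inr (h, 0))).card = 2 := heq (.inr (h, 0)) (Finset.mem_univ _)
    rcases hsub0 h with hs | hs
    · left
      have heqF : F (.inr (h, 0)) = {tA1 h, tB1 h} :=
        Finset.eq_of_subset_of_card_le hs (by rw [hc, Finset.card_pair (by simp)])
      constructor
      · exact (hmemW _).mp (hWFsub _ (heqF ▸ (Finset.mem_insert_self _ _)))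
      · exact (hmemW _).mp (hWFsub _ (heqF ▸ (by simp : tB1 h ∈ ({tA1 h, tB1 h} : Finset (V k)))))
    · right
      have heqF : F (.inr (h, 0)) = {fA1 h, fB1 h} :=
        Finset.eq_of_subset_of_card_le hs (by rw [hc, Finset.card_pair (by simp)])
      constructor
      · exact (hmemW _).mp (hWFsub _ (heqF ▸ (Finset.mem_insert_self _ _)))
      · exact (hmemW _).mp (hWFsub _ (heqF ▸ (by simp : fB1 h ∈ ({fA1 h, fB1 h} : Finset (V k)))))
  have key1 : ∀ h : Fin L, (tA2 h ∉ U ∧ tB2 h ∉ U) ∨ (fA2 h ∉ U ∧ fB2 h ∉ U) := by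
    intro h
    have hc : (F (.inr (h, 1))).card = 2 := heq (.inr (h, 1)) (Finset.mem_univ _)
    rcases hsub1 h with hs | hs
    · left
      have heqF : F (.inr (h, 1)) = {tA2 h, tB2 h} :=
        Finset.eq_of_subset_of_card_le hs (by rw [hc, Finset.card_pair (by simp)])
      constructor
      · exact (hmemW _).mp (hWFsub _ (heqF ▸ (Finset.mem_insert_self _ _)))
      · exact (hmemW _).mp (hWFsub _ (heqF ▸ (by simp : tB2 h ∈ ({tA2 h, tB2 h} : Finset (V k)))))
    · right
      have heqF : F (.inr (h, 1)) = {fA2 h, fB2 h} :=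
        Finset.eq_of_subset_of_card_le hs (by rw [hc, Finset.card_pair (by simp)])
      constructor
      · exact (hmemW _).mp (hWFsub _ (heqF ▸ (Finset.mem_insert_self _ _)))
      · exact (hmemW _).mp (hWFsub _ (heqF ▸ (by simp : fB2 h ∈ ({fA2 h, fB2 h} : Finset (V k)))))
  -- bit agreement
  have hbit1 : ∀ n : ℕ, (i1 : ℕ).testBit n = (i3 : ℕ).testBit n := by
    intro n
    by_cases hn : n < L
    · set hf : Fin L := ⟨n, hn⟩ with hfdef
      cases hb : (i1 : ℕ).testBit n
      · -- bit is 0 : a1 i1 forces fA1 ∈ U, so the t-pair is uncovered; b1's bit must be 0 too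
        have e' := (adj_bit_false (i := i1) (h := hf) hb).1
        have hfA1U : fA1 hf ∈ U := (hU e').resolve_left hi1
        rcases key0 hf with ⟨_, htB1⟩ | ⟨hfA1, _⟩
        · by_contra hb3
          have hb3' : (i3 : ℕ).testBit n = true := by
            cases h3 : (i3 : ℕ).testBit n
            · exact absurd h3.symm hb3
            · rfl
          have e3 := (adj_bit_true (i := i3) (h := hf) hb3').2.2.1
          exact htB1 ((hU e3).resolve_left hi3)
        · exact absurd hfA1U hfA1
      · have e := (adj_bit_true (i := i1) (h := hf) hb).1
        have htA1U : tA1 hf ∈ U := (hU e).resolve_left hi1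
        rcases key0 hf with ⟨htA1, _⟩ | ⟨_, hfB1⟩
        · exact absurd htA1U htA1
        · by_contra hb3
          have hb3' : (i3 : ℕ).testBit n = false := by
            cases h3 : (i3 : ℕ).testBit n
            · rfl
            · exact absurd h3.symm hb3
          have e3 := (adj_bit_false (i := i3) (h := hf) hb3').2.2.1
          exact hfB1 ((hU e3).resolve_left hi3)
    · have hkn : k ≤ 2 ^ n := by
        rw [hm]
        exact Nat.pow_le_pow_right (by norm_num) (by omega)
      rw [Nat.testBit_lt_two_pow (lt_of_lt_of_le i1.isLt hkn),
        Nat.testBit_lt_two_pow (lt_of_lt_of_le i3.isLt hkn)]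
  have hbit2 : ∀ n : ℕ, (j2 : ℕ).testBit n = (j4 : ℕ).testBit n := by
    intro n
    by_cases hn : n < L
    · set hf : Fin L := ⟨n, hn⟩ with hfdef
      cases hb : (j2 : ℕ).testBit n
      · have e' := (adj_bit_false (i := j2) (h := hf) hb).2.1
        have hfA2U : fA2 hf ∈ U := (hU e').resolve_left hj2
        rcases key1 hf with ⟨_, htB2⟩ | ⟨hfA2, _⟩
        · by_contra hb3
          have hb3' : (j4 : ℕ).testBit n = true := by
            cases h3 : (j4 : ℕ).testBit n
            · exact absurd h3.symm hb3
            · rfl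
          have e3 := (adj_bit_true (i := j4) (h := hf) hb3').2.2.2
          exact htB2 ((hU e3).resolve_left hj4)
        · exact absurd hfA2U hfA2
      · have e := (adj_bit_true (i := j2) (h := hf) hb).2.1
        have htA2U : tA2 hf ∈ U := (hU e).resolve_left hj2
        rcases key1 hf with ⟨htA2, _⟩ | ⟨_, hfB2⟩
        · exact absurd htA2U htA2
        · by_contra hb3
          have hb3' : (j4 : ℕ).testBit n = false := by
            cases h3 : (j4 : ℕ).testBit n
            · rfl
            · exact absurd h3.symm hb3
          have e3 := (adj_bit_false (i := j4) (h := hf) hb3').2.2.2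
          exact hfB2 ((hU e3).resolve_left hj4)
    · have hkn : k ≤ 2 ^ n := by
        rw [hm]
        exact Nat.pow_le_pow_right (by norm_num) (by omega)
      rw [Nat.testBit_lt_two_pow (lt_of_lt_of_le j2.isLt hkn),
        Nat.testBit_lt_two_pow (lt_of_lt_of_le j4.isLt hkn)]
  have hi13 : i1 = i3 := Fin.val_injective (Nat.eq_of_testBit_eq hbit1)
  have hj24 : j2 = j4 := Fin.val_injective (Nat.eq_of_testBit_eq hbit2)
  refine ⟨i1, j2, hi1, hj2, ?_, ?_⟩
  · rw [hi13]; exact hi3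
  · rw [hj24]; exact hj4

end VCLowerBound
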